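/- Let α > 0, A > 0, B ∈ (0, A), D ≥ 2A/(1+√8), and define γ(ξ) := A - B·e^{-αξ} for ξ ≥ 0. Then γ > 0 and γ' ≥ 0 on [0,∞), and D·(γ(ξ)+D)·γ''(ξ) + 2·γ(ξ)·γ'(ξ)² ≤ 0 for all ξ ≥ 0. -/

import Mathlib

lemma deriv1 (α A B : ℝ) :
    deriv (fun x => A - B * Real.exp (-(α * x))) = fun x => α * B * Real.exp (-(α * x)) := by
  funext x
  have h : HasDerivAt (fun x => A - B * Real.exp (-(α * x)))
      (α * B * Real.exp (-(α * x))) x := by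
    have h1 : HasDerivAt (fun x : ℝ => -(α * x)) (-α) x := by
      simpa using ((hasDerivAt_id x).const_mul α).fun_neg
    have h2 := (h1.exp.const_mul B).const_sub A
    exact h2.congr_deriv (by ring)
  exact h.deriv

theorem stmt4 (α A B D : ℝ) (hα : 0 < α) (hA : 0 < A) (hB : 0 < B) (hBA : B < A)
    (hD : 2 * A / (1 + Real.sqrt 8) ≤ D) :
    ∀ ξ ∈ Set.Ici (0:ℝ),
      0 < A - B * Real.exp (-(α * ξ))
      ∧ 0 ≤ deriv (fun x => A - B * Real.exp (-(α * x))) ξ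
      ∧ D * ((A - B * Real.exp (-(α * ξ))) + D)
            * deriv (deriv (fun x => A - B * Real.exp (-(α * x)))) ξ
          + 2 * (A - B * Real.exp (-(α * ξ)))
            * (deriv (fun x => A - B * Real.exp (-(α * x))) ξ) ^ 2 ≤ 0 := by
  intro ξ hξ
  simp only [Set.mem_Ici] at hξ
  have hs : Real.sqrt 8 ^ 2 = 8 := Real.sq_sqrt (by norm_num)
  have hs0 : 0 < Real.sqrt 8 := Real.sqrt_pos.2 (by norm_num)
  have h1s : (0:ℝ) < 1 + Real.sqrt 8 := by linarith
  have hD' : 2 * A ≤ D * (1 + Real.sqrt 8) := by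
    rw [div_le_iff₀ h1s] at hD; linarith
  have hD0 : 0 < D := by nlinarith
  set u := B * Real.exp (-(α * ξ)) with hu
  have hu0 : 0 < u := mul_pos hB (Real.exp_pos _)
  have huB : u ≤ B := by
    have : Real.exp (-(α * ξ)) ≤ 1 := Real.exp_le_one_iff.2 (by nlinarith)
    nlinarith
  have hγ : 0 < A - u := by linarith
  have hd1 : deriv (fun x => A - B * Real.exp (-(α * x))) ξ = α * u := by
    rw [deriv1]; simp [hu, mul_assoc]
  have hd2 : deriv (deriv (fun x => A - B * Real.exp (-(α * x)))) ξ
      = -(α ^ 2) * u := by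
    rw [deriv1 α A B]
    have h1 : HasDerivAt (fun x : ℝ => -(α * x)) (-α) ξ := by
      simpa using ((hasDerivAt_id ξ).const_mul α).fun_neg
    have h2 := h1.exp.const_mul (α * B)
    have := h2.deriv
    rw [hu]
    rw [show (fun x => α * B * Real.exp (-(α * x))) = fun x => (α*B) * Real.exp (-(α*x)) from rfl]
    rw [this]; ring
  refine ⟨hγ, ?_, ?_⟩
  · rw [hd1]; positivity
  · rw [hd1, hd2]
    have key : 2 * (A - u) * u ≤ D * ((A - u) + D) := by
      have h8 : (2 * A - D) ^ 2 ≤ 8 * D ^ 2 := by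
        rcases le_or_gt D (2 * A) with h | h
        · have : 2 * A - D ≤ Real.sqrt 8 * D := by nlinarith
          nlinarith
        · nlinarith
      nlinarith [sq_nonneg (2 * (A - u) - (2 * u - D))]
    have hα2 : 0 < α ^ 2 := by positivity
    nlinarith [mul_pos hα2 hu0, mul_le_mul_of_nonneg_left key (le_of_lt (mul_pos hα2 hu0))]
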